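/- Let q = 2^n, F = GF(q^4), and t ∈ F with t^{q^2+1} = 1, t ≠ 1 and z ∈ F with z^{q-1} = 1. Then (1+zt)^{(q-1)(q^2+1)} = (z + z^{-1} + t + t^{-1})^{q-1}. -/
import Mathlib

theorem power_identity_zt (n : ℕ) (hn : 0 < n) (F : Type) [Field F] [Fintype F]
    (hF : Fintype.card F = (2^n)^4) (z t : F)
    (ht : t ^ ((2^n)^2 + 1) = 1) (ht1 : t ≠ 1) (hz : z ^ (2^n - 1) = 1) :
    (1 + z * t) ^ ((2^n - 1) * ((2^n)^2 + 1)) = (z + z⁻¹ + t + t⁻¹) ^ (2^n - 1) := by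
  -- characteristic 2
  have hcard0 : ((Fintype.card F : ℕ) : F) = 0 := FiniteField.cast_card_eq_zero F
  have h2 : (2 : F) = 0 := by
    rw [hF] at hcard0
    have h4 : ((2 : F)) ^ (n * 4) = 0 := by
      rw [pow_mul]; exact_mod_cast hcard0
    exact pow_eq_zero_iff (by positivity) |>.mp h4
  have hchar : ringChar F = 2 := CharP.ringChar_of_prime_eq_zero Nat.prime_two h2
  haveI : CharP F 2 := hchar ▸ ringChar.charP F
  haveI : Fact (Nat.Prime 2) := ⟨Nat.prime_two⟩
  set q := 2 ^ n with hq
  have hq1 : 2 ≤ q := by calc 2 = 2^1 := rfl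
    _ ≤ 2^n := Nat.pow_le_pow_right (by norm_num) hn
  have hz0 : z ≠ 0 := by
    intro h; rw [h, zero_pow (by omega : q - 1 ≠ 0)] at hz; exact one_ne_zero hz.symm
  have ht0 : t ≠ 0 := by
    intro h; rw [h, zero_pow (by positivity : q ^ 2 + 1 ≠ 0)] at ht
    exact one_ne_zero ht.symm
  -- z ^ q = z
  have hzq : z ^ q = z := by
    calc z ^ q = z ^ (q - 1) * z := by rw [← pow_succ]; congr 1; omega
    _ = z := by rw [hz, one_mul]
  have hzq2 : z ^ q ^ 2 = z := by rw [sq, pow_mul, hzq, hzq]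
  have htq2 : t ^ q ^ 2 = t⁻¹ := by
    apply eq_inv_of_mul_eq_one_left
    rw [pow_succ] at ht
    exact ht
  -- key computation
  have hq2pow : q ^ 2 = 2 ^ (n * 2) := by rw [hq, ← pow_mul]
  have key : (1 + z * t) ^ (q ^ 2 + 1) = z * (z + z⁻¹ + t + t⁻¹) := by
    rw [pow_succ, hq2pow, add_pow_char_pow, one_pow, mul_pow, ← hq2pow, hzq2, htq2]
    field_simp
    ring_nf
  rw [mul_comm (q - 1), pow_mul, key, mul_pow, hz, one_mul]
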